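/- Let M be a free ℤ-module of rank 3 equipped with a symmetric bilinear form B : M × M → ℤ that is positive definite (B(v,v) > 0 for all v ≠ 0). Suppose h, T ∈ M satisfy B(h,h) = 3, B(h,T) = 4, B(T,T) = 10, the submodule spanned by h and T is saturated in M (for every nonzero integer n and every m ∈ M, if n·m lies in the span of h and T then m lies in the span of h and T), and every v ∈ M with B(v,h) = 0 has B(v,v) even and B(v,v) ≠ 2. Then there exists J ∈ M such that (h, T, J) is a ℤ-basis of M, B(h,J) = 0, 0 ≤ B(T,J) ≤ 7, B(J,J) is even, B(J,J) > 2, and 14·B(J,J) > 3·B(T,J)². -/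

import Mathlib

private lemma basis_helper {R : Type*} [CommRing R] {M : Type*} [AddCommGroup M] [Module R M]
    (h T J : M)
    (key1 : ∀ a b c : R, a • h + b • T + c • J = 0 → a = 0 ∧ b = 0 ∧ c = 0)
    (key2 : ∀ m : M, ∃ a b c : R, m = a • h + b • T + c • J) :
    ∃ bas : Module.Basis (Fin 3) R M, bas 0 = h ∧ bas 1 = T ∧ bas 2 = J := by
  have hli : LinearIndependent R ![h, T, J] := by
    rw [Fintype.linearIndependent_iff]
    intro g hg
    have hg' : g 0 • h + g 1 • T + g 2 • J = 0 := by
      simpa [Fin.sum_univ_three] using hg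
    obtain ⟨h1, h2, h3⟩ := key1 _ _ _ hg'
    intro i; fin_cases i <;> assumption
  have hsp : ⊤ ≤ Submodule.span R (Set.range ![h, T, J]) := by
    intro m _
    obtain ⟨a, b, c, rfl⟩ := key2 m
    refine Submodule.add_mem _ (Submodule.add_mem _ ?_ ?_) ?_ <;>
      refine Submodule.smul_mem _ _ (Submodule.subset_span ?_)
    · exact ⟨0, rfl⟩
    · exact ⟨1, rfl⟩
    · exact ⟨2, rfl⟩
  refine ⟨Module.Basis.mk hli hsp, ?_, ?_, ?_⟩ <;> simp [Module.Basis.mk_apply]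

/-- Given a rank-3 free module and a saturated rank-2 submodule spanned by `h, T`, there
is `J₀` completing `h, T` to a "basis" in the coordinate sense. -/
private lemma exists_compl3 {R : Type*} [CommRing R] [IsDomain R] [IsPrincipalIdealRing R]
    {M : Type*} [AddCommGroup M] [Module R M] [Module.Free R M] [Module.Finite R M]
    (hrk : Module.finrank R M = 3) (h T : M)
    (li2 : ∀ a b : R, a • h + b • T = 0 → a = 0 ∧ b = 0)
    (hsat : ∀ n : R, n ≠ 0 → ∀ m : M,
      n • m ∈ Submodule.span R ({h, T} : Set M) →
      m ∈ Submodule.span R ({h, T} : Set M)) :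
    ∃ J₀ : M, (∀ a b c : R, a • h + b • T + c • J₀ = 0 → a = 0 ∧ b = 0 ∧ c = 0) ∧
      (∀ m : M, ∃ a b c : R, m = a • h + b • T + c • J₀) := by
  classical
  set N : Submodule R M := Submodule.span R ({h, T} : Set M) with hN
  have hhN : h ∈ N := Submodule.subset_span (by simp)
  have hTN : T ∈ N := Submodule.subset_span (by simp)
  haveI hNZ : NoZeroSMulDivisors R (M ⧸ N) := by
    constructor
    intro n q hnq
    by_cases hn : n = 0
    · exact Or.inl hn
    · right
      obtain ⟨m, rfl⟩ := N.mkQ_surjective q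
      have hmem : n • m ∈ N := by
        have h0 : N.mkQ (n • m) = 0 := by rw [map_smul]; exact hnq
        rwa [← LinearMap.mem_ker, Submodule.ker_mkQ] at h0
      have hm : m ∈ N := hsat n hn m hmem
      rwa [← LinearMap.mem_ker, Submodule.ker_mkQ]
  haveI : Module.Finite R (M ⧸ N) := Module.Finite.quotient R N
  haveI : Module.Free R (M ⧸ N) := Module.free_of_finite_type_torsion_free'
  obtain ⟨σ, hσ⟩ := Module.projective_lifting_property N.mkQ LinearMap.id N.mkQ_surjective
  have hσ' : ∀ q : M ⧸ N, N.mkQ (σ q) = q := fun q => LinearMap.congr_fun hσ q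
  set ι := Module.Free.ChooseBasisIndex R (M ⧸ N) with hι
  set bQ : Module.Basis ι R (M ⧸ N) := Module.Free.chooseBasis R (M ⧸ N) with hbQ
  have hli2' : LinearIndependent R ![h, T] := by
    rw [Fintype.linearIndependent_iff]
    intro g hg
    have := li2 (g 0) (g 1) (by simpa [Fin.sum_univ_two] using hg)
    intro i; fin_cases i <;> simp [this.1, this.2]
  have hσinj : LinearMap.ker σ = ⊥ := by
    rw [LinearMap.ker_eq_bot]
    intro x y hxy
    have := congrArg N.mkQ hxy
    rwa [hσ', hσ'] at this
  have hliσ : LinearIndependent R (σ ∘ bQ) := bQ.linearIndependent.map' σ hσinj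
  have hsprange : Submodule.span R (Set.range (σ ∘ bQ)) = LinearMap.range σ := by
    rw [Set.range_comp, Submodule.span_image, bQ.span_eq, Submodule.map_top]
  have hdisj : Disjoint (Submodule.span R (Set.range ![h, T]))
      (Submodule.span R (Set.range (σ ∘ bQ))) := by
    rw [Submodule.disjoint_def, hsprange]
    intro x hx hx2
    obtain ⟨z, rfl⟩ := hx2
    have hxN : σ z ∈ N := by
      refine Submodule.span_le.2 ?_ hx
      rintro y ⟨i, rfl⟩
      fin_cases i
      · exact hhN
      · exact hTN
    have hz : z = 0 := by
      have h0 : N.mkQ (σ z) = 0 := by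
        rwa [← LinearMap.mem_ker, Submodule.ker_mkQ]
      rwa [hσ'] at h0
    rw [hz, map_zero]
  have hv_li : LinearIndependent R (Sum.elim ![h, T] (σ ∘ bQ)) :=
    hli2'.sum_type hliσ hdisj
  have hv_sp : ⊤ ≤ Submodule.span R (Set.range (Sum.elim ![h, T] (σ ∘ bQ))) := by
    intro m _
    have hrange : Set.range (Sum.elim ![h, T] (σ ∘ bQ)) =
        Set.range ![h, T] ∪ Set.range (σ ∘ bQ) := Set.Sum.elim_range _ _
    rw [hrange, Submodule.span_union]
    have hmem : m - σ (N.mkQ m) ∈ N := by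
      have h0 : N.mkQ (m - σ (N.mkQ m)) = 0 := by
        rw [map_sub, hσ', sub_self]
      rwa [← LinearMap.mem_ker, Submodule.ker_mkQ] at h0
    have hNle : N ≤ Submodule.span R (Set.range ![h, T]) := by
      rw [hN]
      refine Submodule.span_le.2 ?_
      rintro y (rfl | rfl)
      · exact Submodule.subset_span ⟨0, rfl⟩
      · exact Submodule.subset_span ⟨1, rfl⟩
    have h1 : m - σ (N.mkQ m) ∈ Submodule.span R (Set.range ![h, T]) := hNle hmem
    have h2 : σ (N.mkQ m) ∈ Submodule.span R (Set.range (σ ∘ bQ)) := by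
      rw [hsprange]; exact ⟨N.mkQ m, rfl⟩
    have := Submodule.add_mem_sup h1 h2
    rwa [sub_add_cancel] at this
  let bas' : Module.Basis (Fin 2 ⊕ ι) R M := Module.Basis.mk hv_li hv_sp
  have hcard : Fintype.card ι = 1 := by
    have := Module.finrank_eq_card_basis bas'
    rw [hrk, Fintype.card_sum, Fintype.card_fin] at this
    omega
  obtain ⟨e, he⟩ := Fintype.card_eq_one_iff.1 hcard
  refine ⟨σ (bQ e), ?_, ?_⟩
  · intro a b c habc
    have hmkh : N.mkQ h = 0 := by rwa [← LinearMap.mem_ker, Submodule.ker_mkQ]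
    have hmkT : N.mkQ T = 0 := by rwa [← LinearMap.mem_ker, Submodule.ker_mkQ]
    have h0 : c • bQ e = 0 := by
      have h1 := congrArg N.mkQ habc
      simpa [map_add, map_smul, hmkh, hmkT, hσ'] using h1
    have hc : c = 0 := by
      rcases smul_eq_zero.1 h0 with hc | hbe
      · exact hc
      · exact absurd hbe (bQ.ne_zero e)
    subst hc
    simp only [zero_smul, add_zero] at habc
    obtain ⟨ha, hb⟩ := li2 a b habc
    exact ⟨ha, hb, rfl⟩
  · intro m
    have hrepr : ∀ z : M ⧸ N, z = bQ.repr z e • bQ e := by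
      intro z
      have huniv : (Finset.univ : Finset ι) = {e} :=
        Finset.eq_singleton_iff_unique_mem.2 ⟨Finset.mem_univ e, fun x _ => he x⟩
      conv_lhs => rw [← bQ.sum_repr z]
      rw [huniv, Finset.sum_singleton]
    have hmem : m - bQ.repr (N.mkQ m) e • σ (bQ e) ∈ N := by
      have h0 : N.mkQ (m - bQ.repr (N.mkQ m) e • σ (bQ e)) = 0 := by
        rw [map_sub, map_smul, hσ']
        exact sub_eq_zero_of_eq (hrepr (N.mkQ m))
      rwa [← LinearMap.mem_ker, Submodule.ker_mkQ] at h0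
    obtain ⟨a, b, hab⟩ := Submodule.mem_span_pair.1 hmem
    refine ⟨a, b, bQ.repr (N.mkQ m) e, ?_⟩
    rw [hab]; abel

theorem stmt0 (M : Type*) [AddCommGroup M] [Module ℤ M] [Module.Free ℤ M]
    (hrk : Module.finrank ℤ M = 3)
    (B : M →ₗ[ℤ] M →ₗ[ℤ] ℤ)
    (hsymm : ∀ v w : M, B v w = B w v)
    (hpos : ∀ v : M, v ≠ 0 → 0 < B v v)
    (h T : M)
    (hhh : B h h = 3) (hhT : B h T = 4) (hTT : B T T = 10)
    (hsat : ∀ n : ℤ, n ≠ 0 → ∀ m : M,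
      n • m ∈ Submodule.span ℤ ({h, T} : Set M) →
      m ∈ Submodule.span ℤ ({h, T} : Set M))
    (heven : ∀ v : M, B v h = 0 → Even (B v v) ∧ B v v ≠ 2) :
    ∃ J : M, (∃ bas : Module.Basis (Fin 3) ℤ M, bas 0 = h ∧ bas 1 = T ∧ bas 2 = J) ∧
      B h J = 0 ∧ 0 ≤ B T J ∧ B T J ≤ 7 ∧ Even (B J J) ∧ 2 < B J J ∧
      3 * (B T J) ^ 2 < 14 * B J J := by
  classical
  rename_i iACG iMod iFree
  haveI : Unique (Module ℤ M) := AddCommGroup.uniqueIntModule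
  have hinst : iMod = AddCommGroup.toIntModule M := Subsingleton.elim _ _
  subst hinst
  haveI hMfin : Module.Finite ℤ M := Module.finite_of_finrank_pos (by omega)
  have li2 : ∀ a b : ℤ, a • h + b • T = 0 → a = 0 ∧ b = 0 := by
    intro a b hab
    have e1 : B h (a • h + b • T) = 0 := by rw [hab]; simp
    have e2 : B T (a • h + b • T) = 0 := by rw [hab]; simp
    simp only [map_add, map_smul, smul_eq_mul, hhh, hhT, hTT, hsymm T h] at e1 e2
    omega
  obtain ⟨J₀, key1, key2⟩ := exists_compl3 hrk h T li2 hsat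
  -- choose the sign and translation
  set p := B h J₀ with hp
  set q₀ := B T J₀ with hq₀
  set r := q₀ - 6 * p with hr
  obtain ⟨ε, t, hε, hq0, hq7⟩ :
      ∃ ε t : ℤ, (ε = 1 ∨ ε = -1) ∧ 0 ≤ ε * r - 14 * t ∧ ε * r - 14 * t ≤ 7 := by
    by_cases hcase : r % 14 ≤ 7
    · exact ⟨1, r / 14, Or.inl rfl, by omega, by omega⟩
    · exact ⟨-1, (-r) / 14, Or.inr rfl, by omega, by omega⟩
  have hε2 : ε * ε = 1 := by rcases hε with rfl | rfl <;> norm_num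
  have hεne : ε ≠ 0 := by rcases hε with rfl | rfl <;> norm_num
  set x := ε * p + 4 * t with hx
  set y := -(ε * p) - 3 * t with hy
  set J := ε • J₀ + x • h + y • T with hJ
  have hJ₀eq : J₀ = ε • J - (ε * x) • h - (ε * y) • T := by
    rw [hJ, smul_add, smul_add, smul_smul, hε2, one_smul, smul_smul, smul_smul]
    abel
  have key1J : ∀ a b c : ℤ, a • h + b • T + c • J = 0 → a = 0 ∧ b = 0 ∧ c = 0 := by
    intro a b c habc
    have h0 : (a + c * x) • h + (b + c * y) • T + (c * ε) • J₀ = 0 := by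
      rw [← habc, hJ]; module
    obtain ⟨h1, h2, h3⟩ := key1 _ _ _ h0
    have hc : c = 0 := by
      rcases mul_eq_zero.1 h3 with hc | hc
      · exact hc
      · exact absurd hc hεne
    subst hc
    simp only [zero_mul, add_zero] at h1 h2
    exact ⟨h1, h2, rfl⟩
  have key2J : ∀ m : M, ∃ a b c : ℤ, m = a • h + b • T + c • J := by
    intro m
    obtain ⟨a, b, c, hm⟩ := key2 m
    refine ⟨a - c * (ε * x), b - c * (ε * y), c * ε, ?_⟩
    rw [hm, hJ₀eq]; module
  have hBhJ : B h J = 0 := by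
    rw [hJ]
    simp only [map_add, map_smul, smul_eq_mul, hhh, hhT, ← hp]
    rw [hx, hy]; ring
  have hBTJ : B T J = ε * r - 14 * t := by
    rw [hJ]
    simp only [map_add, map_smul, smul_eq_mul, hTT, hsymm T h, hhT, ← hq₀]
    rw [hx, hy, hr]; ring
  have hBJh : B J h = 0 := by rw [hsymm]; exact hBhJ
  have hBJT : B J T = B T J := hsymm J T
  obtain ⟨hevenJ, hne2⟩ := heven J hBJh
  have hJne : J ≠ 0 := by
    intro h0
    have := key1J 0 0 1 (by rw [h0]; simp)
    exact one_ne_zero this.2.2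
  have hposJ : 0 < B J J := hpos J hJne
  have hgt2 : 2 < B J J := by
    obtain ⟨k, hk⟩ := hevenJ
    omega
  set q := B T J with hq
  set w := (14 : ℤ) • J + (4 * q) • h - (3 * q) • T with hw
  have hwne : w ≠ 0 := by
    intro h0
    have hcomb : (4 * q) • h + (-(3 * q)) • T + (14 : ℤ) • J = 0 := by
      rw [← h0, hw]; module
    have := key1J _ _ _ hcomb
    norm_num at this
  have hBww : B w w = 14 * (14 * B J J - 3 * q ^ 2) := by
    rw [hw]
    simp only [map_add, map_sub, map_smul, LinearMap.add_apply, LinearMap.sub_apply,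
      LinearMap.smul_apply, smul_eq_mul, hhh, hhT, hTT, hBhJ, hBJh, hBJT,
      hsymm T h, ← hq]
    ring
  have hineq : 3 * q ^ 2 < 14 * B J J := by
    have := hpos w hwne
    rw [hBww] at this
    nlinarith
  obtain ⟨bas, hb0, hb1, hb2⟩ := basis_helper h T J key1J key2J
  exact ⟨J, ⟨bas, hb0, hb1, hb2⟩, hBhJ, by omega, by omega, hevenJ, hgt2, hineq⟩
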